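/- If A is a third order strongly completely positive tensor A = ∑_{l=1}^{r} (u^{(l)})^3 where every u^{(l)} is a strictly positive vector in R^n and {u^{(1)},...,u^{(r)}} spans R^n, then A is a third order positive definite symmetric tensor. -/

import Mathlib

/-- A strongly completely positive tensor `A = ∑_l (u^{(l)})^3` with all
`u^{(l)}` strictly positive and `{u^{(l)}}` spanning `ℝⁿ` is positive definite:
each slice matrix is positive definite. -/
theorem strongly_completely_positive_tensor_pd
    (n r : ℕ) (u : Fin r → Fin n → ℝ)
    (hu : ∀ l i, 0 < u l i)
    (hspan : Submodule.span ℝ (Set.range u) = ⊤)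
    (A : Fin n → Fin n → Fin n → ℝ)
    (hA : ∀ i j k, A i j k = ∑ l, u l i * u l j * u l k) :
    ∀ i, Matrix.PosDef (Matrix.of fun j k => A i j k) := by
  intro i
  refine Matrix.PosDef.of_dotProduct_mulVec_pos ?_ ?_
  · ext j k
    simp only [Matrix.conjTranspose_apply, Matrix.of_apply, star_trivial, hA]
    exact Finset.sum_congr rfl fun l _ => by ring
  · intro x hx
    have key : dotProduct x (Matrix.mulVec (Matrix.of fun j k => A i j k) x)
        = ∑ l, u l i * (∑ j, u l j * x j) ^ 2 := by
      simp only [dotProduct, Matrix.mulVec, Matrix.of_apply, hA, sq,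
        Finset.sum_mul, Finset.mul_sum]
      exact (Finset.sum_congr rfl fun j _ => Finset.sum_comm).trans
        (Finset.sum_comm.trans (Finset.sum_congr rfl fun l _ =>
          Finset.sum_congr rfl fun k _ => Finset.sum_congr rfl fun j _ => by ring))
    have hex : ∃ l, (∑ j, u l j * x j) ≠ 0 := by
      by_contra hall
      push_neg at hall
      apply hx
      let f : (Fin n → ℝ) →ₗ[ℝ] ℝ :=
        { toFun := fun y => ∑ j, y j * x j
          map_add' := by intro a b; simp [add_mul, Finset.sum_add_distrib]
          map_smul' := by intro c a; simp [mul_assoc, Finset.mul_sum] }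
      have hker : Submodule.span ℝ (Set.range u) ≤ LinearMap.ker f := by
        rw [Submodule.span_le]
        rintro _ ⟨l, rfl⟩
        exact hall l
      rw [hspan] at hker
      have hfx : ∑ j, x j * x j = 0 := hker Submodule.mem_top
      funext j
      have := (Finset.sum_eq_zero_iff_of_nonneg
        (fun j _ => mul_self_nonneg (x j))).mp hfx j (Finset.mem_univ j)
      exact mul_self_eq_zero.mp this
    obtain ⟨l0, hl0⟩ := hex
    rw [show star x = x from star_trivial x, key]
    refine Finset.sum_pos' (fun l _ => ?_) ⟨l0, Finset.mem_univ l0, ?_⟩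
    · exact mul_nonneg (hu l i).le (sq_nonneg _)
    · exact mul_pos (hu l0 i) (by positivity)
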